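/- Let G ⊂ ℝⁿ (n ≥ 1) be a convex polytope with nonempty interior (the convex hull of a finite set of points) and let p < n be a positive real number. Then for every C > 0 there exist nonempty compact convex subsets K, L of G with C·d_H(K,L)^p > ρ_G(K,L); that is, no inequality of the form C·d_H(K,L)^p ≤ ρ_G(K,L) holds for all K, L. -/

import Mathlib

open MeasureTheory Metric Pointwise
open scoped RealInnerProductSpace

lemma cap_near_vertex {n : ℕ} {t : Finset (EuclideanSpace ℝ (Fin n))}
    {u v : EuclideanSpace ℝ (Fin n)} (hv : v ∈ t) {δ D : ℝ} (hδ : 0 < δ)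
    (hD : ∀ w ∈ t, dist w v ≤ D)
    (hsep : ∀ w ∈ t, w ≠ v → ⟪u, w⟫ ≤ ⟪u, v⟫ - δ)
    {ε : ℝ} (hε : 0 ≤ ε) {x : EuclideanSpace ℝ (Fin n)}
    (hx : x ∈ convexHull ℝ (t : Set _)) (hfx : ⟪u, v⟫ - ε ≤ ⟪u, x⟫) :
    dist x v ≤ ε / δ * D := by
  classical
  rw [Finset.convexHull_eq] at hx
  obtain ⟨w, hw0, hw1, hwx⟩ := hx
  have hxeq : x = ∑ y ∈ t, w y • y := by
    rw [← hwx, Finset.centerMass_eq_of_sum_1 _ _ hw1]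
    simp [id]
  set S := ∑ y ∈ t.erase v, w y with hS
  have hSnn : 0 ≤ S := Finset.sum_nonneg fun y hy => hw0 y (Finset.mem_of_mem_erase hy)
  have hkey : ⟪u, v⟫ - ⟪u, x⟫ = ∑ y ∈ t, w y * (⟪u, v⟫ - ⟪u, y⟫) := by
    rw [hxeq, inner_sum]
    simp only [real_inner_smul_right, mul_sub]
    rw [Finset.sum_sub_distrib, ← Finset.sum_mul, hw1, one_mul]
  have hsum : S * δ ≤ ⟪u, v⟫ - ⟪u, x⟫ := by
    rw [hkey, ← Finset.add_sum_erase t _ hv, sub_self, mul_zero, zero_add, hS,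
      Finset.sum_mul]
    refine Finset.sum_le_sum fun y hy => ?_
    have h1 := hsep y (Finset.mem_of_mem_erase hy) (Finset.ne_of_mem_erase hy)
    have h2 := hw0 y (Finset.mem_of_mem_erase hy)
    nlinarith
  have hSle : S ≤ ε / δ := by
    rw [le_div_iff₀ hδ]; linarith
  have hD0 : 0 ≤ D := le_trans (by simp) (hD v hv)
  have hxv : x - v = ∑ y ∈ t, w y • (y - v) := by
    rw [hxeq]
    simp only [smul_sub]
    rw [Finset.sum_sub_distrib, ← Finset.sum_smul, hw1, one_smul]
  calc dist x v = ‖x - v‖ := dist_eq_norm _ _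
    _ = ‖∑ y ∈ t, w y • (y - v)‖ := by rw [hxv]
    _ ≤ ∑ y ∈ t, ‖w y • (y - v)‖ := norm_sum_le _ _
    _ = ∑ y ∈ t, w y * ‖y - v‖ := by
        refine Finset.sum_congr rfl fun y hy => ?_
        rw [norm_smul, Real.norm_eq_abs, abs_of_nonneg (hw0 y hy)]
    _ = ∑ y ∈ t.erase v, w y * ‖y - v‖ := by
        rw [← Finset.add_sum_erase t _ hv, sub_self, norm_zero, mul_zero, zero_add]
    _ ≤ ∑ y ∈ t.erase v, w y * D := by
        refine Finset.sum_le_sum fun y hy => ?_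
        have := hD y (Finset.mem_of_mem_erase hy)
        rw [dist_eq_norm] at this
        exact mul_le_mul_of_nonneg_left this (hw0 y (Finset.mem_of_mem_erase hy))
    _ = S * D := by rw [hS, Finset.sum_mul]
    _ ≤ ε / δ * D := mul_le_mul_of_nonneg_right hSle hD0

lemma exists_unit_injective {n : ℕ} (s : Finset (EuclideanSpace ℝ (Fin n)))
    (hpair : ∃ a ∈ s, ∃ b ∈ s, a ≠ b) :
    ∃ u : EuclideanSpace ℝ (Fin n), ‖u‖ = 1 ∧
      ∀ a ∈ s, ∀ b ∈ s, a ≠ b → ⟪u, a⟫ ≠ ⟪u, b⟫ := by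
  classical
  set P := (s ×ˢ s).filter (fun q => q.1 ≠ q.2) with hP
  set Bad : Set (EuclideanSpace ℝ (Fin n)) :=
    ⋃ q ∈ P, {u : EuclideanSpace ℝ (Fin n) | ⟪u, q.1 - q.2⟫ = 0} with hBadDef
  have hBad : volume Bad = 0 := by
    refine (measure_biUnion_null_iff P.countable_toSet).2 fun q hq => ?_
    have hq' : q.1 ≠ q.2 := (Finset.mem_filter.1 hq).2
    have hd : q.1 - q.2 ≠ 0 := sub_ne_zero.2 hq'
    have heq : {u : EuclideanSpace ℝ (Fin n) | ⟪u, q.1 - q.2⟫ = 0}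
        = ((LinearMap.ker (innerSL ℝ (q.1 - q.2) : EuclideanSpace ℝ (Fin n) →ₗ[ℝ] ℝ) : Submodule ℝ _) : Set (EuclideanSpace ℝ (Fin n))) := by
      ext u
      rw [Set.mem_setOf_eq, SetLike.mem_coe, LinearMap.mem_ker, ContinuousLinearMap.coe_coe, innerSL_apply_apply,
        real_inner_comm]
    rw [heq]
    refine Measure.addHaar_submodule _ _ ?_
    intro h
    have h2 : (q.1 - q.2) ∈ LinearMap.ker (innerSL ℝ (q.1 - q.2) : EuclideanSpace ℝ (Fin n) →ₗ[ℝ] ℝ) := h ▸ Submodule.mem_top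
    rw [LinearMap.mem_ker] at h2
    simp only [ContinuousLinearMap.coe_coe, innerSL_apply_apply] at h2
    exact hd (inner_self_eq_zero.1 h2)
  obtain ⟨u₀, hu₀⟩ : ∃ u₀, u₀ ∉ Bad := by
    by_contra h
    push_neg at h
    have h1 : (Set.univ : Set (EuclideanSpace ℝ (Fin n))) ⊆ Bad := fun x _ => h x
    have h2 := measure_mono (μ := volume) h1
    rw [hBad] at h2
    have h3 : 0 < volume (Set.univ : Set (EuclideanSpace ℝ (Fin n))) :=
      Measure.measure_pos_of_nonempty_interior volume (by rw [interior_univ]; exact Set.univ_nonempty)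
    exact absurd (le_antisymm h2 zero_le) h3.ne'
  have hu₀' : ∀ a ∈ s, ∀ b ∈ s, a ≠ b → ⟪u₀, a - b⟫ ≠ 0 := by
    intro a ha b hb hab h
    exact hu₀ (Set.mem_biUnion (t := fun q : _ × _ => {u | ⟪u, q.1 - q.2⟫ = 0})
      (x := (a, b)) (Finset.mem_coe.2 (Finset.mem_filter.2
        ⟨Finset.mem_product.2 ⟨ha, hb⟩, hab⟩)) h)
  obtain ⟨a, ha, b, hb, hab⟩ := hpair
  have hu₀ne : u₀ ≠ 0 := by
    intro h
    exact hu₀' a ha b hb hab (by simp [h])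
  refine ⟨‖u₀‖⁻¹ • u₀, ?_, ?_⟩
  · rw [norm_smul, norm_inv, norm_norm]
    exact inv_mul_cancel₀ (norm_ne_zero_iff.2 hu₀ne)
  · intro a' ha' b' hb' hab' h
    refine hu₀' a' ha' b' hb' hab' ?_
    have h0 : ⟪‖u₀‖⁻¹ • u₀, a' - b'⟫ = 0 := by
      rw [inner_sub_right, h, sub_self]
    rw [real_inner_smul_left] at h0
    rcases mul_eq_zero.1 h0 with h' | h'
    · exact absurd h' (inv_ne_zero (norm_ne_zero_iff.2 hu₀ne))
    · exact h'

/-- `ρ_G(K,L) := 2·Vol(G + K ∪̃ L) − Vol(G + K) − Vol(G + L)`. -/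
noncomputable def rhoDist {n : ℕ} (G K L : Set (EuclideanSpace ℝ (Fin n))) : ℝ :=
  2 * (volume (G + closure (convexHull ℝ (K ∪ L)))).toReal
    - (volume (G + K)).toReal - (volume (G + L)).toReal

theorem stmt6 {n : ℕ} (hn : 1 ≤ n) (G : Set (EuclideanSpace ℝ (Fin n)))
    (hGpoly : ∃ s : Finset (EuclideanSpace ℝ (Fin n)), G = convexHull ℝ (s : Set _))
    (hGint : (interior G).Nonempty)
    (p : ℝ) (hp : 0 < p) (hpn : p < n) :
    ∀ C : ℝ, 0 < C → ∃ K L : Set (EuclideanSpace ℝ (Fin n)),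
      K.Nonempty ∧ IsCompact K ∧ Convex ℝ K ∧ K ⊆ G ∧
      L.Nonempty ∧ IsCompact L ∧ Convex ℝ L ∧ L ⊆ G ∧
      rhoDist G K L < C * hausdorffDist K L ^ p := by
  classical
  haveI : NeZero n := ⟨by omega⟩
  intro C hC
  obtain ⟨s, hGs⟩ := hGpoly
  have hGconv : Convex ℝ G := hGs ▸ convex_convexHull ℝ _
  have hGcomp : IsCompact G := hGs ▸ s.finite_toSet.isCompact_convexHull ℝ
  have hGclosed : IsClosed G := hGcomp.isClosed
  have hGne : G.Nonempty := ⟨hGint.choose, interior_subset hGint.choose_spec⟩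
  have hGpos : 0 < volume G := Measure.measure_pos_of_nonempty_interior volume hGint
  have hpair : ∃ a ∈ s, ∃ b ∈ s, a ≠ b := by
    by_contra h
    push_neg at h
    have hsub : G.Subsingleton := by
      rw [hGs]
      have hs : (s : Set (EuclideanSpace ℝ (Fin n))).Subsingleton := fun a ha b hb =>
        h a ha b hb
      rcases hs.eq_empty_or_singleton with h' | ⟨a, h'⟩
      · rw [h']; simp
      · rw [h', convexHull_singleton]; exact Set.subsingleton_singleton
    exact absurd (hsub.measure_zero volume) hGpos.ne'
  obtain ⟨u, hu1, huinj⟩ := exists_unit_injective s hpair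
  have hsne : s.Nonempty := by obtain ⟨a, ha, -⟩ := hpair; exact ⟨a, ha⟩
  obtain ⟨v, hvs, hvmax⟩ := s.exists_max_image (fun w => ⟪u, w⟫) hsne
  have hvstrict : ∀ w ∈ s, w ≠ v → ⟪u, w⟫ < ⟪u, v⟫ := fun w hw hwv =>
    lt_of_le_of_ne (hvmax w hw) (huinj w hw v hvs hwv)
  have hlin : IsLinearMap ℝ (fun x : EuclideanSpace ℝ (Fin n) => ⟪u, x⟫) :=
    ⟨fun x y => inner_add_right _ _ _, fun c x => real_inner_smul_right _ _ _⟩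
  have hGmax : ∀ x ∈ G, ⟪u, x⟫ ≤ ⟪u, v⟫ := by
    intro x hx
    rw [hGs] at hx
    exact convexHull_min (fun w hw => hvmax w hw) (convex_halfSpace_le hlin _) hx
  have hvG : v ∈ G := by rw [hGs]; exact subset_convexHull ℝ _ hvs
  have hverase : (s.erase v).Nonempty := by
    obtain ⟨a, ha, b, hb, hab⟩ := hpair
    by_cases hav : a = v
    · exact ⟨b, Finset.mem_erase.2 ⟨fun h => hab (by rw [hav, h]), hb⟩⟩
    · exact ⟨a, Finset.mem_erase.2 ⟨hav, ha⟩⟩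
  set δ := ⟪u, v⟫ - (s.erase v).sup' hverase (fun w => ⟪u, w⟫) with hδdef
  have hδ : 0 < δ := by
    rw [hδdef, sub_pos]
    exact (Finset.sup'_lt_iff hverase).2 fun w hw =>
      hvstrict w (Finset.mem_of_mem_erase hw) (Finset.ne_of_mem_erase hw)
  have hsep : ∀ w ∈ s, w ≠ v → ⟪u, w⟫ ≤ ⟪u, v⟫ - δ := by
    intro w hw hwv
    have h1 : ⟪u, w⟫ ≤ (s.erase v).sup' hverase (fun w => ⟪u, w⟫) :=
      Finset.le_sup' _ (Finset.mem_erase.2 ⟨hwv, hw⟩)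
    rw [hδdef]; linarith
  set D := Metric.diam (s : Set (EuclideanSpace ℝ (Fin n))) with hDdef
  have hD : ∀ w ∈ s, dist w v ≤ D := fun w hw =>
    Metric.dist_le_diam_of_mem s.finite_toSet.isBounded hw hvs
  have hD0 : 0 ≤ D := Metric.diam_nonneg
  obtain ⟨g₀, hg₀⟩ := hGint
  have hg₀G : g₀ ∈ G := interior_subset hg₀
  have hg₀lt : ⟪u, g₀⟫ < ⟪u, v⟫ := by
    obtain ⟨r, hr, hball⟩ := Metric.isOpen_iff.1 isOpen_interior g₀ hg₀
    have hmem : g₀ + (r / 2) • u ∈ G := by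
      apply interior_subset (hball ?_)
      rw [Metric.mem_ball, dist_eq_norm, add_sub_cancel_left, norm_smul, hu1,
        Real.norm_eq_abs, abs_of_pos (by linarith), mul_one]
      linarith
    have h1 := hGmax _ hmem
    rw [inner_add_right, real_inner_smul_right, real_inner_self_eq_norm_mul_norm, hu1,
      one_mul, mul_one] at h1
    linarith
  set c := (volume (Metric.ball (0 : EuclideanSpace ℝ (Fin n)) 1)).toReal with hcdef
  have hc0 : 0 ≤ c := ENNReal.toReal_nonneg
  set M := (4 * D / δ) ^ n * c with hMdef
  -- choose ε
  have hnp : (0 : ℝ) < (n : ℝ) - p := by linarith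
  have htend : Filter.Tendsto (fun ε : ℝ => M * ε ^ ((n : ℝ) - p))
      (nhdsWithin 0 (Set.Ioi 0)) (nhds 0) := by
    have h1 : Filter.Tendsto (fun ε : ℝ => ε ^ ((n : ℝ) - p)) (nhds 0) (nhds 0) := by
      have h2 := (Real.continuousAt_rpow_const 0 ((n : ℝ) - p) (Or.inr hnp.le)).tendsto
      rwa [Real.zero_rpow hnp.ne'] at h2
    have h3 := Filter.Tendsto.const_mul M (h1.mono_left (nhdsWithin_le_nhds :
        nhdsWithin (0:ℝ) (Set.Ioi 0) ≤ nhds 0))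
    rwa [mul_zero] at h3
  have hev1 : ∀ᶠ ε in nhdsWithin 0 (Set.Ioi 0), M * ε ^ ((n : ℝ) - p) < C :=
    htend.eventually_lt_const hC
  have hev2 : ∀ᶠ ε in nhdsWithin 0 (Set.Ioi 0), ε < ⟪u, v⟫ - ⟪u, g₀⟫ :=
    (eventually_lt_nhds (by linarith : (0:ℝ) < ⟪u, v⟫ - ⟪u, g₀⟫)).filter_mono
      nhdsWithin_le_nhds
  have hev3 : ∀ᶠ ε in nhdsWithin 0 (Set.Ioi (0:ℝ)), ε ∈ Set.Ioi (0:ℝ) :=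
    eventually_mem_nhdsWithin
  obtain ⟨ε, hεC, hεub, hεmem⟩ := (hev1.and (hev2.and hev3)).exists
  obtain ⟨hεub, hεmem⟩ := (⟨hεub, hεmem⟩ : _ ∧ _)
  have hεpos : 0 < ε := hεmem
  set L := G ∩ {x | ⟪u, x⟫ ≤ ⟪u, v⟫ - ε} with hLdef
  have hg₀L : g₀ ∈ L := ⟨hg₀G, by simp only [Set.mem_setOf_eq]; linarith⟩
  have hLne : L.Nonempty := ⟨g₀, hg₀L⟩
  have hLclosed' : IsClosed {x : EuclideanSpace ℝ (Fin n) | ⟪u, x⟫ ≤ ⟪u, v⟫ - ε} :=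
    isClosed_le (continuous_const.inner continuous_id) continuous_const
  have hLcomp : IsCompact L := hGcomp.inter_right hLclosed'
  have hLconv : Convex ℝ L := hGconv.inter (convex_halfSpace_le hlin _)
  have hLG : L ⊆ G := Set.inter_subset_left
  refine ⟨G, L, hGne, hGcomp, hGconv, Set.Subset.rfl, hLne, hLcomp, hLconv, hLG, ?_⟩
  set A := G + G with hA
  set B := G + L with hB
  have hBA : B ⊆ A := Set.add_subset_add_left hLG
  have hAcomp : IsCompact A := hGcomp.add hGcomp
  have hBcomp : IsCompact B := hGcomp.add hLcomp
  have hAfin : volume A ≠ ⊤ := hAcomp.measure_lt_top.ne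
  have hBfin : volume B ≠ ⊤ := hBcomp.measure_lt_top.ne
  have hhull : closure (convexHull ℝ (G ∪ L)) = G := by
    rw [Set.union_eq_self_of_subset_right hLG, hGconv.convexHull_eq, hGclosed.closure_eq]
  have hdiffvol : volume (A \ B) = volume A - volume B :=
    measure_diff hBA hBcomp.isClosed.measurableSet.nullMeasurableSet hBfin
  have hrho : rhoDist G G L = (volume (A \ B)).toReal := by
    rw [rhoDist, hhull, hdiffvol, ENNReal.toReal_sub_of_le (measure_mono hBA) hAfin]
    ring
  have hsep' : ∀ w ∈ s + s, w ≠ v + v → ⟪u, w⟫ ≤ ⟪u, v + v⟫ - δ := by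
    intro w hw hwv
    rw [Finset.mem_add] at hw
    obtain ⟨a, ha, b, hb, rfl⟩ := hw
    rw [inner_add_right]
    by_cases hav : a = v
    · have hbv : b ≠ v := fun h => hwv (by rw [hav, h])
      have h1 := hsep b hb hbv
      have h2 := hvmax a ha
      simp only [inner_add_right]
      linarith
    · have h1 := hsep a ha hav
      have h2 := hvmax b hb
      simp only [inner_add_right]
      linarith
  have hD' : ∀ w ∈ s + s, dist w (v + v) ≤ 2 * D := by
    intro w hw
    rw [Finset.mem_add] at hw
    obtain ⟨a, ha, b, hb, rfl⟩ := hw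
    calc dist (a + b) (v + v) ≤ dist a v + dist b v := dist_add_add_le _ _ _ _
      _ ≤ D + D := add_le_add (hD a ha) (hD b hb)
      _ = 2 * D := by ring
  have hdiff : A \ B ⊆ Metric.closedBall (v + v) (2 * ε / δ * (2 * D)) := by
    rintro x ⟨hxA, hxB⟩
    have hx' : x ∈ convexHull ℝ ((s + s : Finset _) : Set (EuclideanSpace ℝ (Fin n))) := by
      rw [Finset.coe_add, convexHull_add, ← hGs]
      exact hxA
    have hfx : ⟪u, v + v⟫ - 2 * ε ≤ ⟪u, x⟫ := by
      by_contra hcon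
      push_neg at hcon
      obtain ⟨g₁, hg₁, g₂, hg₂, rfl⟩ := Set.mem_add.1 hxA
      have hm : (2⁻¹ : ℝ) • (g₁ + g₂) ∈ G := by
        have h1 := hGconv hg₁ hg₂ (by norm_num : (0:ℝ) ≤ 2⁻¹) (by norm_num : (0:ℝ) ≤ 2⁻¹)
          (by norm_num)
        rwa [← smul_add] at h1
      have hfm : ⟪u, (2⁻¹ : ℝ) • (g₁ + g₂)⟫ ≤ ⟪u, v⟫ - ε := by
        rw [real_inner_smul_right]
        simp only [inner_add_right] at hcon ⊢
        linarith
      refine hxB (Set.mem_add.2 ⟨(2⁻¹ : ℝ) • (g₁ + g₂), hm,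
        (2⁻¹ : ℝ) • (g₁ + g₂), ⟨hm, hfm⟩, ?_⟩)
      rw [← add_smul]
      norm_num
    exact Metric.mem_closedBall.2
      (cap_near_vertex (Finset.add_mem_add hvs hvs) hδ hD' hsep'
        (by positivity : (0:ℝ) ≤ 2 * ε) hx' hfx)
  have hrad : (0:ℝ) ≤ 2 * ε / δ * (2 * D) :=
    mul_nonneg (div_nonneg (by linarith) hδ.le) (by linarith)
  have hvol : (volume (A \ B)).toReal ≤ (2 * ε / δ * (2 * D)) ^ n * c := by
    have h1 := measure_mono (μ := volume) hdiff
    rw [Measure.addHaar_closedBall _ _ hrad, finrank_euclideanSpace_fin] at h1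
    have h2 : ENNReal.ofReal ((2 * ε / δ * (2 * D)) ^ n)
        * volume (Metric.ball (0 : EuclideanSpace ℝ (Fin n)) 1) ≠ ⊤ :=
      ENNReal.mul_ne_top ENNReal.ofReal_ne_top measure_ball_lt_top.ne
    calc (volume (A \ B)).toReal ≤ _ := ENNReal.toReal_mono h2 h1
      _ = (2 * ε / δ * (2 * D)) ^ n * c := by
          rw [ENNReal.toReal_mul, ENNReal.toReal_ofReal (pow_nonneg hrad n)]
  have hne : EMetric.hausdorffEdist G L ≠ ⊤ :=
    hausdorffEdist_ne_top_of_nonempty_of_bounded hGne hLne hGcomp.isBounded hLcomp.isBounded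
  have hεdH : ε ≤ hausdorffDist G L := by
    refine le_trans ?_ (infDist_le_hausdorffDist_of_mem hvG hne)
    rw [infDist_eq_iInf]
    haveI : Nonempty L := hLne.to_subtype
    refine le_ciInf fun y => ?_
    have hy : ⟪u, (y : EuclideanSpace ℝ (Fin n))⟫ ≤ ⟪u, v⟫ - ε := y.2.2
    have h1 : ε ≤ ⟪u, v - (y : EuclideanSpace ℝ (Fin n))⟫ := by
      rw [inner_sub_right]; linarith
    calc ε ≤ ⟪u, v - (y : EuclideanSpace ℝ (Fin n))⟫ := h1
      _ ≤ ‖u‖ * ‖v - (y : EuclideanSpace ℝ (Fin n))‖ := real_inner_le_norm _ _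
      _ = dist v (y : EuclideanSpace ℝ (Fin n)) := by rw [hu1, one_mul, dist_eq_norm]
  have hcalc : (2 * ε / δ * (2 * D)) ^ n * c = M * ε ^ n := by
    have h1 : 2 * ε / δ * (2 * D) = 4 * D / δ * ε := by ring
    rw [h1, mul_pow, hMdef]
    ring
  have hεn : (ε : ℝ) ^ n = ε ^ p * ε ^ ((n : ℝ) - p) := by
    rw [← Real.rpow_natCast ε n, ← Real.rpow_add hεpos]
    congr 1
    ring
  rw [hrho]
  calc (volume (A \ B)).toReal ≤ (2 * ε / δ * (2 * D)) ^ n * c := hvol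
    _ = M * ε ^ n := hcalc
    _ = (M * ε ^ ((n : ℝ) - p)) * ε ^ p := by rw [hεn]; ring
    _ < C * ε ^ p := mul_lt_mul_of_pos_right hεC (Real.rpow_pos_of_pos hεpos p)
    _ ≤ C * hausdorffDist G L ^ p :=
        mul_le_mul_of_nonneg_left (Real.rpow_le_rpow hεpos.le hεdH hp.le) hC.le
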